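/- Let C ⊆ 𝕀² be a maximal chain and define f_C^-(x) := ⨅{y | (x,y) ∈ C} and f_C^+(x) := ⨆{y | (x,y) ∈ C}. Then f_C^- is join-continuous, f_C^+ is meet-continuous, f_C^- = (f_C^+)^∨, f_C^+ = (f_C^-)^∧, and C = C_{f_C^-} = {(x,y) ∈ 𝕀² | (f_C^-)^∨(x) ≤ y ≤ (f_C^-)^∧(x)}. -/

import Mathlib

noncomputable section

instance : Fact ((0:ℝ) ≤ 1) := ⟨zero_le_one⟩

/-- `𝕀` is the real unit interval `[0,1]`, a complete lattice. -/
notation "𝕀" => unitInterval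

/-- `f^∧(x) = ⨅_{x < x'} f x'`, the meet-continuous closure data of `f`. -/
def mCl (f : 𝕀 → 𝕀) : 𝕀 → 𝕀 :=
  fun x => ⨅ y : {y : 𝕀 // x < y}, f y.1

/-- `f^∨(x) = ⨆_{x' < x} f x'`, the join-continuous closure data of `f`. -/
def jCl (f : 𝕀 → 𝕀) : 𝕀 → 𝕀 :=
  fun x => ⨆ y : {y : 𝕀 // y.1 < x}, f y.1

/-- `f` is join-continuous: it preserves all suprema. -/
def JoinCont (f : 𝕀 → 𝕀) : Prop :=
  ∀ S : Set 𝕀, f (sSup S) = ⨆ x ∈ S, f x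

/-- `f` is meet-continuous: it preserves all infima. -/
def MeetCont (f : 𝕀 → 𝕀) : Prop :=
  ∀ S : Set 𝕀, f (sInf S) = ⨅ x ∈ S, f x

/-- The right adjoint `f^ρ` of a join-continuous `f`. -/
def radj (f : 𝕀 → 𝕀) : 𝕀 → 𝕀 := fun y => sSup {x | f x ≤ y}

/-- The left adjoint `g^λ` of a meet-continuous `g`. -/
def ladj (g : 𝕀 → 𝕀) : 𝕀 → 𝕀 := fun y => sInf {x | y ≤ g x}

/-- `f* := (f^ρ)^∨`. -/
def starF (f : 𝕀 → 𝕀) : 𝕀 → 𝕀 := jCl (radj f)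

/-- `f ⊗ g := g ∘ f`. -/
def otimes (f g : 𝕀 → 𝕀) : 𝕀 → 𝕀 := g ∘ f

/-- `f ⊕ g := (g^∧ ∘ f^∧)^∨`. -/
def oplus (f g : 𝕀 → 𝕀) : 𝕀 → 𝕀 := jCl (mCl g ∘ mCl f)

/-- A tuple is closed if `f_{i,j} ⊗ f_{j,k} ≤ f_{i,k}` for `i < j < k`. -/
def ClosedT (d : ℕ) (f : Fin d → Fin d → (𝕀 → 𝕀)) : Prop :=
  ∀ i j k : Fin d, i < j → j < k → ∀ x, otimes (f i j) (f j k) x ≤ f i k x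

/-- A tuple is open if `f_{i,k} ≤ f_{i,j} ⊕ f_{j,k}` for `i < j < k`. -/
def OpenT (d : ℕ) (f : Fin d → Fin d → (𝕀 → 𝕀)) : Prop :=
  ∀ i j k : Fin d, i < j → j < k → ∀ x, f i k x ≤ oplus (f i j) (f j k) x

/-- Pointwise order on the meaningful (`i < j`) entries of tuples. -/
def TLE (d : ℕ) (f g : Fin d → Fin d → (𝕀 → 𝕀)) : Prop :=
  ∀ i j : Fin d, i < j → ∀ x, f i j x ≤ g i j x

/-- Each meaningful entry of the tuple is join-continuous. -/
def TupleJC (d : ℕ) (f : Fin d → Fin d → (𝕀 → 𝕀)) : Prop :=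
  ∀ i j : Fin d, i < j → JoinCont (f i j)

/-- `⊕`-value of a subdivision `ℓ₀ < ℓ₁ < … < ℓ_k`:
`f_{ℓ₀,ℓ₁} ⊕ f_{ℓ₁,ℓ₂} ⊕ … ⊕ f_{ℓ_{k-1},ℓ_k}`. -/
def oplusChain {d : ℕ} (f : Fin d → Fin d → (𝕀 → 𝕀)) : List (Fin d) → (𝕀 → 𝕀)
  | [] => id
  | [_] => id
  | a :: b :: l => oplus (f a b) (oplusChain f (b :: l))

/-- Subdivisions of the interval `[i,j]`: strictly increasing lists from `i` to `j`. -/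
def Subdiv (d : ℕ) (i j : Fin d) : Set (List (Fin d)) :=
  {L | L.Chain' (· < ·) ∧ L.head? = some i ∧ L.getLast? = some j}

/-- The interior of a tuple: `interior(f)_{i,j}` is the infimum, over all subdivisions
`i = ℓ₀ < ℓ₁ < … < ℓ_k = j`, of `f_{ℓ₀,ℓ₁} ⊕ … ⊕ f_{ℓ_{k-1},ℓ_k}`. -/
def interiorT (d : ℕ) (f : Fin d → Fin d → (𝕀 → 𝕀)) : Fin d → Fin d → (𝕀 → 𝕀) :=
  fun i j => ⨅ L : Subdiv d i j, oplusChain f L.1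

/-- The chain `C_f ⊆ 𝕀²` associated to a monotone `f : 𝕀 → 𝕀`. -/
def Cf2 (f : 𝕀 → 𝕀) : Set (𝕀 × 𝕀) :=
  {p | jCl f p.1 ≤ p.2 ∧ p.2 ≤ mCl f p.1}

/-- `f_C^-(x) = ⨅ {y | (x,y) ∈ C}`. -/
def fCm (C : Set (𝕀 × 𝕀)) : 𝕀 → 𝕀 := fun x => sInf {y | (x, y) ∈ C}

/-- `f_C^+(x) = ⨆ {y | (x,y) ∈ C}`. -/
def fCp (C : Set (𝕀 × 𝕀)) : 𝕀 → 𝕀 := fun x => sSup {y | (x, y) ∈ C}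

/-- Compatibility of a (fully extended) tuple: `f_{j,k} ∘ f_{i,j} ≤ f_{i,k}` for all `i,j,k`. -/
def Compatible (d : ℕ) (f : Fin d → Fin d → (𝕀 → 𝕀)) : Prop :=
  ∀ i j k : Fin d, ∀ x, f j k (f i j x) ≤ f i k x

/-- The subset `C_f ⊆ 𝕀^d` associated to a compatible tuple. -/
def Cfd (d : ℕ) (f : Fin d → Fin d → (𝕀 → 𝕀)) : Set (Fin d → 𝕀) :=
  {x | ∀ i j : Fin d, f i j (x i) ≤ x j}

/-- `v(C)_{i,j}(x) = ⨅ {c_j | c ∈ C, c_i = x}`. -/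
def vC (d : ℕ) (C : Set (Fin d → 𝕀)) (i j : Fin d) : 𝕀 → 𝕀 :=
  fun x => sInf {z | ∃ c ∈ C, c i = x ∧ c j = z}

/-- Canonical extension of a tuple given on `i < j` to all pairs:
identity on the diagonal and `f_{j,i} := (f_{i,j})*` below it. -/
def extT (d : ℕ) (g : Fin d → Fin d → (𝕀 → 𝕀)) : Fin d → Fin d → (𝕀 → 𝕀) :=
  fun i j => if i < j then g i j else if j < i then starF (g j i) else id

/-- The one-step function `h_{x,y}`. -/
def oneStep (x y : 𝕀) : 𝕀 → 𝕀 := fun t => if t ≤ x then 0 else y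


section MaxChain
variable {C : Set (𝕀 × 𝕀)} (hC : IsMaxChain (· ≤ ·) C)
include hC

lemma mem_of_comp (p : 𝕀 × 𝕀) (h : ∀ c ∈ C, p ≤ c ∨ c ≤ p) : p ∈ C := by
  have hins : IsChain (· ≤ ·) (insert p C) := hC.1.insert (fun b hb _ => h b hb)
  have he := hC.2 hins (Set.subset_insert _ _)
  rw [he]; exact Set.mem_insert _ _

lemma slice_nonempty (x : 𝕀) : ∃ y, (x, y) ∈ C := by
  classical
  set s : 𝕀 := ⨆ c : {c : 𝕀 × 𝕀 // c ∈ C ∧ c.1 ≤ x}, (c : 𝕀 × 𝕀).2 with hs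
  refine ⟨s, mem_of_comp hC (x, s) (fun c hc => ?_)⟩
  by_cases h1 : c.1 ≤ x
  · exact Or.inr ⟨h1, le_iSup (fun c : {c : 𝕀 × 𝕀 // c ∈ C ∧ c.1 ≤ x} => (c : 𝕀 × 𝕀).2) ⟨c, hc, h1⟩⟩
  · push_neg at h1
    refine Or.inl ⟨h1.le, ?_⟩
    apply iSup_le; rintro ⟨a, ha, hax⟩
    rcases hC.1.total ha hc with h | h
    · exact h.2
    · exact absurd (le_trans h.1 hax) (not_le.mpr h1)

lemma fCm_mem (x : 𝕀) : (x, fCm C x) ∈ C := by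
  apply mem_of_comp hC; intro c hc
  by_cases h : ∃ y, (x, y) ∈ C ∧ (x, y) ≤ c
  · obtain ⟨y, hy, hyc⟩ := h
    exact Or.inl (le_trans ⟨le_refl x, sInf_le (show y ∈ {y | (x, y) ∈ C} from hy)⟩ hyc)
  · push_neg at h
    obtain ⟨y₀, hy₀⟩ := slice_nonempty hC x
    have hcy : ∀ y, (x, y) ∈ C → c ≤ (x, y) := fun y hy =>
      (hC.1.total hy hc).resolve_left (fun hh => h y hy hh)
    refine Or.inr ⟨(hcy y₀ hy₀).1, le_sInf fun y hy => (hcy y hy).2⟩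

lemma fCp_mem (x : 𝕀) : (x, fCp C x) ∈ C := by
  apply mem_of_comp hC; intro c hc
  by_cases h : ∃ y, (x, y) ∈ C ∧ c ≤ (x, y)
  · obtain ⟨y, hy, hyc⟩ := h
    exact Or.inr (le_trans hyc ⟨le_refl x, le_sSup (show y ∈ {y | (x, y) ∈ C} from hy)⟩)
  · push_neg at h
    obtain ⟨y₀, hy₀⟩ := slice_nonempty hC x
    have hcy : ∀ y, (x, y) ∈ C → (x, y) ≤ c := fun y hy =>
      (hC.1.total hy hc).resolve_right (fun hh => h y hy hh)
    refine Or.inl ⟨(hcy y₀ hy₀).1, sSup_le fun y hy => (hcy y hy).2⟩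

lemma fCm_le_fCp (x : 𝕀) : fCm C x ≤ fCp C x := sInf_le (fCp_mem hC x)

lemma cross {x x' : 𝕀} (h : x < x') : fCp C x ≤ fCm C x' := by
  rcases hC.1.total (fCp_mem hC x) (fCm_mem hC x') with h1 | h1
  · exact h1.2
  · exact absurd h1.1 (not_le.mpr h)

lemma fCm_mono : Monotone (fCm C) := by
  intro x x' h
  rcases h.lt_or_eq with h | h
  · exact (fCm_le_fCp hC x).trans (cross hC h)
  · rw [h]

lemma fCp_mono : Monotone (fCp C) := by
  intro x x' h
  rcases h.lt_or_eq with h | h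
  · exact (cross hC h).trans (fCm_le_fCp hC x')
  · rw [h]

lemma jClp_mem (x : 𝕀) : (x, jCl (fCp C) x) ∈ C := by
  apply mem_of_comp hC; intro c hc
  by_cases h1 : c.1 < x
  · refine Or.inr ⟨h1.le, ?_⟩
    have : c.2 ≤ fCp C c.1 := le_sSup (by simpa using hc)
    exact this.trans (le_iSup (fun y : {y : 𝕀 // (y : ℝ) < x} => fCp C y.1)
      ⟨c.1, by exact_mod_cast h1⟩)
  · push_neg at h1
    refine Or.inl ⟨h1, ?_⟩
    apply iSup_le; rintro ⟨x', hx'⟩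
    have hx'' : x' < x := by exact_mod_cast hx'
    rcases hC.1.total (fCp_mem hC x') hc with h | h
    · exact h.2
    · exact absurd (h.1.trans_lt (hx''.trans_le h1)) (lt_irrefl _)

lemma mClm_mem (x : 𝕀) : (x, mCl (fCm C) x) ∈ C := by
  apply mem_of_comp hC; intro c hc
  by_cases h1 : x < c.1
  · refine Or.inl ⟨h1.le, ?_⟩
    have : fCm C c.1 ≤ c.2 := sInf_le (by simpa using hc)
    refine le_trans (iInf_le (fun y : {y : 𝕀 // x < y} => fCm C y.1) ⟨c.1, h1⟩) this
  · push_neg at h1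
    refine Or.inr ⟨h1, ?_⟩
    apply le_iInf; rintro ⟨x', hx'⟩
    rcases hC.1.total (fCm_mem hC x') hc with h | h
    · exact absurd ((h1.trans_lt hx').trans_le h.1) (lt_irrefl _)
    · exact h.2

lemma fCm_eq_jCl_fCp : fCm C = jCl (fCp C) := by
  funext x
  apply le_antisymm
  · exact sInf_le (jClp_mem hC x)
  · apply iSup_le; rintro ⟨x', hx'⟩
    exact cross hC (by exact_mod_cast hx')

lemma fCp_eq_mCl_fCm : fCp C = mCl (fCm C) := by
  funext x
  apply le_antisymm
  · apply le_iInf; rintro ⟨x', hx'⟩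
    exact cross hC hx'
  · exact le_sSup (mClm_mem hC x)

lemma joinCont_fCm : JoinCont (fCm C) := by
  intro S
  apply le_antisymm
  · have hmem : (sSup S, ⨆ x ∈ S, fCm C x) ∈ C := by
      apply mem_of_comp hC; intro c hc
      by_cases h : ∃ x ∈ S, c ≤ (x, fCm C x)
      · obtain ⟨x, hx, hcx⟩ := h
        exact Or.inr (hcx.trans ⟨le_sSup hx, le_biSup (fCm C) hx⟩)
      · push_neg at h
        have h' : ∀ x ∈ S, (x, fCm C x) ≤ c := fun x hx =>
          (hC.1.total (fCm_mem hC x) hc).resolve_right (fun hh => h x hx hh)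
        exact Or.inl ⟨sSup_le fun x hx => (h' x hx).1, iSup₂_le fun x hx => (h' x hx).2⟩
    exact sInf_le hmem
  · exact iSup₂_le fun x hx => fCm_mono hC (le_sSup hx)

lemma meetCont_fCp : MeetCont (fCp C) := by
  intro S
  apply le_antisymm
  · exact le_iInf₂ fun x hx => fCp_mono hC (sInf_le hx)
  · have hmem : (sInf S, ⨅ x ∈ S, fCp C x) ∈ C := by
      apply mem_of_comp hC; intro c hc
      by_cases h : ∃ x ∈ S, (x, fCp C x) ≤ c
      · obtain ⟨x, hx, hcx⟩ := h
        exact Or.inl (le_trans ⟨sInf_le hx, biInf_le _ hx⟩ hcx)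
      · push_neg at h
        have h' : ∀ x ∈ S, c ≤ (x, fCp C x) := fun x hx =>
          (hC.1.total (fCp_mem hC x) hc).resolve_left (fun hh => h x hx hh)
        exact Or.inr ⟨le_sInf fun x hx => (h' x hx).1, le_iInf₂ fun x hx => (h' x hx).2⟩
    exact le_sSup hmem

lemma fCm_le_jCl_fCm (x : 𝕀) : fCm C x ≤ jCl (fCm C) x := by
  conv_lhs => rw [fCm_eq_jCl_fCp hC]
  apply iSup_le; rintro ⟨x', hx'⟩
  have hx'' : x' < x := by exact_mod_cast hx'
  obtain ⟨z, hz1, hz2⟩ := exists_between hx''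
  exact le_trans (cross hC hz1)
    (le_iSup (fun y : {y : 𝕀 // (y : ℝ) < x} => fCm C y.1) ⟨z, by exact_mod_cast hz2⟩)

lemma chain_eq_Cf2 : C = Cf2 (fCm C) := by
  ext ⟨x, y⟩
  constructor
  · intro hp
    constructor
    · refine le_trans ?_ (sInf_le (show y ∈ {y | (x, y) ∈ C} from hp))
      apply iSup_le; rintro ⟨x', hx'⟩
      exact fCm_mono hC (le_of_lt (by exact_mod_cast hx' : x' < x))
    · rw [← fCp_eq_mCl_fCm hC]
      exact le_sSup (show y ∈ {y | (x, y) ∈ C} from hp)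
  · rintro ⟨h1, h2⟩
    have hy1 : fCm C x ≤ y := (fCm_le_jCl_fCm hC x).trans h1
    have hy2 : y ≤ fCp C x := by rw [fCp_eq_mCl_fCm hC]; exact h2
    apply mem_of_comp hC; intro c hc
    rcases hC.1.total (fCm_mem hC x) hc with hm | hm
    · rcases le_total y c.2 with hy | hy
      · exact Or.inl ⟨hm.1, hy⟩
      · rcases hC.1.total (fCp_mem hC x) hc with hp | hp
        · exact Or.inl ⟨hm.1, hy2.trans hp.2⟩
        · exact Or.inr ⟨hp.1, hy⟩
    · exact Or.inr (hm.trans ⟨le_refl x, hy1⟩)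

end MaxChain


/-- for a maximal chain `C ⊆ 𝕀²`, `f_C^-` is join-continuous, `f_C^+`
is meet-continuous, `f_C^- = (f_C^+)^∨`, `f_C^+ = (f_C^-)^∧`, and `C = C_{f_C^-}`. -/
theorem statement13 (C : Set (𝕀 × 𝕀)) (hC : IsMaxChain (· ≤ ·) C) :
    JoinCont (fCm C) ∧ MeetCont (fCp C) ∧
    fCm C = jCl (fCp C) ∧ fCp C = mCl (fCm C) ∧
    C = Cf2 (fCm C) :=
  ⟨joinCont_fCm hC, meetCont_fCp hC, fCm_eq_jCl_fCp hC, fCp_eq_mCl_fCm hC, chain_eq_Cf2 hC⟩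


end
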